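/- For dimension 1, the regularity radius satisfies ρ̂₁ ≤ 2R: if X ⊂ ℝ is a Delone set of type (r,R) such that all 2R-clusters of X are mutually equivalent, then X is a regular system. -/

import Mathlib

noncomputable section
open scoped Pointwise

/-- Euclidean d-space. -/
abbrev Euc (d : ℕ) : Type := EuclideanSpace ℝ (Fin d)

/-- The 1-based standard basis vector `e_k` of `ℝ^d` (for `1 ≤ k ≤ d`). -/
def eVec (d k : ℕ) : Euc d :=
  if h : k - 1 < d then EuclideanSpace.single ⟨k - 1, h⟩ (1 : ℝ) else 0

/-- Conditions (A1)–(A3) on the doubly-infinite integer sequence `A`. -/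
def EngelSeq (d : ℕ) (A : ℤ → ℤ) : Prop :=
  (∀ i : ℤ, 1 ≤ (A i).natAbs ∧ (A i).natAbs ≤ d - 1) ∧
  (∀ i : ℤ, (A (i + (d - 1))).natAbs = (A i).natAbs) ∧
  (∀ s : ℕ, 1 ≤ s → s ≤ d - 1 → ∃ i : ℤ, 1 ≤ i ∧ i ≤ d - 1 ∧ (A i).natAbs = s)

/-- The vector `u_i = sign(a_i) e_{|a_i|}`. -/
def engelU (d : ℕ) (A : ℤ → ℤ) (i : ℤ) : Euc d :=
  (if 0 < A i then (1 : ℝ) else -1) • eVec d (A i).natAbs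

/-- The cumulative sum `u_1 + ⋯ + u_i` (with the natural convention for `i ≤ 0`,
so that `engelCum 0 = 0` and `engelCum i - engelCum (i-1) = u_i` for all `i`). -/
def engelCum (d : ℕ) (A : ℤ → ℤ) (i : ℤ) : Euc d :=
  if 0 ≤ i then ∑ j ∈ Finset.range i.toNat, engelU d A ((j : ℤ) + 1)
  else -∑ j ∈ Finset.range (-i).toNat, engelU d A (-(j : ℤ))

/-- The translation vector placing layer `m` of an Engel set:
layer `m` lies at height `2bm`, and the horizontal shifts `δ·u_i` accumulate
according to (E3), (E4). (Integer division is floor division.) -/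
def engelOffset (d : ℕ) (A : ℤ → ℤ) (b δ : ℝ) (m : ℤ) : Euc d :=
  ((2 * b) * (m : ℝ)) • eVec d d + δ • engelCum d A (m / 2)

/-- The horizontal grid `Y = 2aℤ^{d-1} × {0}` in `ℝ^d`. -/
def engelGrid (d : ℕ) (a : ℝ) : Set (Euc d) :=
  {x | ∀ j : Fin d, ((j : ℕ) < d - 1 → ∃ m : ℤ, x j = 2 * a * (m : ℝ)) ∧
        ((j : ℕ) = d - 1 → x j = 0)}

/-- Layer `X_m` of the Engel set `X(A,a,b,δ)`. -/
def engelLayer (d : ℕ) (A : ℤ → ℤ) (a b δ : ℝ) (m : ℤ) : Set (Euc d) :=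
  engelOffset d A b δ m +ᵥ engelGrid d a

/-- The Engel set `X(A,a,b,δ) = ⋃_m X_m`. -/
def engelSet (d : ℕ) (A : ℤ → ℤ) (a b δ : ℝ) : Set (Euc d) :=
  ⋃ m : ℤ, engelLayer d A a b δ m

/-- A Delone set of type `(r,R)`: every open `r`-ball contains at most one point of `X`,
and every closed `R`-ball contains at least one point of `X`. -/
def IsDeloneSet {V : Type*} [MetricSpace V] (X : Set V) (r R : ℝ) : Prop :=
  (∀ y : V, (X ∩ Metric.ball y r).Subsingleton) ∧
  (∀ y : V, (X ∩ Metric.closedBall y R).Nonempty)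

/-- The ρ-cluster of `X` at `x`. -/
def cluster {V : Type*} [MetricSpace V] (X : Set V) (x : V) (ρ : ℝ) : Set V :=
  X ∩ Metric.closedBall x ρ

/-- Equivalence of the ρ-clusters of `X` at `x` and `x'`: an isometry of the ambient
space carries the one cluster onto the other, mapping center to center. -/
def ClustersEquiv {V : Type*} [MetricSpace V] (X : Set V) (x x' : V) (ρ : ℝ) : Prop :=
  ∃ g : V ≃ᵢ V, g x = x' ∧ g '' cluster X x ρ = cluster X x' ρ

/-- A regular system: the symmetry group of `X` acts transitively on `X`. -/
def IsRegularSystem {V : Type*} [MetricSpace V] (X : Set V) : Prop :=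
  ∀ x ∈ X, ∀ y ∈ X, ∃ g : V ≃ᵢ V, g '' X = X ∧ g x = y

/-- The "next point" specification. -/
def SpecNext (X : Set ℝ) (R : ℝ) (p q : ℝ) : Prop :=
  q ∈ X ∧ p < q ∧ q - p ≤ 2*R ∧ ∀ z ∈ X, p < z → q ≤ z

/-- The "previous point" specification. -/
def SpecPrev (X : Set ℝ) (R : ℝ) (p p' : ℝ) : Prop :=
  p' ∈ X ∧ p' < p ∧ p - p' ≤ 2*R ∧ ∀ z ∈ X, z < p → z ≤ p'

lemma delone_sep {r R : ℝ} {X : Set ℝ} (hX : IsDeloneSet X r R)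
    {x y : ℝ} (hx : x ∈ X) (hy : y ∈ X) (h : |x - y| < r) : x = y := by
  have hr : 0 < r := lt_of_le_of_lt (abs_nonneg _) h
  refine hX.1 y ⟨hx, ?_⟩ ⟨hy, ?_⟩
  · simpa [Metric.mem_ball, Real.dist_eq] using h
  · simp [Metric.mem_ball, hr]

lemma delone_cover {r R : ℝ} {X : Set ℝ} (hX : IsDeloneSet X r R) (t : ℝ) :
    ∃ z ∈ X, |z - t| ≤ R := by
  obtain ⟨z, hz, hz2⟩ := hX.2 t
  exact ⟨z, hz, by simpa [Metric.mem_closedBall, Real.dist_eq] using hz2⟩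

lemma exists_next {r R : ℝ} {X : Set ℝ} (hX : IsDeloneSet X r R) (hr : 0 < r) (hR : 0 < R)
    {p : ℝ} (hp : p ∈ X) : ∃ q, SpecNext X R p q := by
  have hSne : (X ∩ Set.Ioi p).Nonempty := by
    obtain ⟨z, hz, hzd⟩ := delone_cover hX (p + R + r)
    refine ⟨z, hz, ?_⟩
    have := neg_abs_le (z - (p + R + r))
    simp only [Set.mem_Ioi]
    linarith
  set S := X ∩ Set.Ioi p with hS
  have hbdd : BddBelow S := ⟨p, fun z hz => (le_of_lt hz.2)⟩
  set q := sInf S with hq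
  have hlow : ∀ z ∈ S, p + r ≤ z := by
    intro z hz
    have hne : z ≠ p := ne_of_gt hz.2
    by_contra hc
    push_neg at hc
    exact hne (delone_sep hX hz.1 hp
      (by rw [abs_sub_lt_iff]; constructor <;> [linarith; linarith [Set.mem_Ioi.mp hz.2]]))
  have hqlow : p + r ≤ q := le_csInf hSne hlow
  have hclose : ∀ ε : ℝ, 0 < ε → ∃ z ∈ S, z < q + ε := by
    intro ε hε
    by_contra hc
    push_neg at hc
    have := le_csInf hSne hc
    linarith
  obtain ⟨w, hwS, hw⟩ := hclose r hr
  have hwq : w = q := by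
    refine le_antisymm ?_ (csInf_le hbdd hwS)
    refine le_of_forall_pos_le_add ?_
    intro ε hε
    rcases le_or_gt r ε with h | h
    · linarith
    · obtain ⟨z, hzS, hz⟩ := hclose ε hε
      have hzq : q ≤ z := csInf_le hbdd hzS
      have hwq' : q ≤ w := csInf_le hbdd hwS
      have : z = w := delone_sep hX hzS.1 hwS.1
        (by rw [abs_sub_lt_iff]; constructor <;> linarith)
      linarith
  have hqS : q ∈ S := hwq ▸ hwS
  refine ⟨q, hqS.1, lt_of_lt_of_le (by linarith) hqlow, ?_, fun z hz hpz => csInf_le hbdd ⟨hz, hpz⟩⟩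
  by_contra hc
  push_neg at hc
  obtain ⟨z, hz, hzd⟩ := delone_cover hX ((p + q)/2)
  have h1 := le_abs_self (z - (p+q)/2)
  have h2 := neg_abs_le (z - (p+q)/2)
  have hzp : p < z := by linarith
  have := csInf_le hbdd (⟨hz, hzp⟩ : z ∈ S)
  linarith

lemma exists_prev {r R : ℝ} {X : Set ℝ} (hX : IsDeloneSet X r R) (hr : 0 < r) (hR : 0 < R)
    {p : ℝ} (hp : p ∈ X) : ∃ q, SpecPrev X R p q := by
  have hSne : (X ∩ Set.Iio p).Nonempty := by
    obtain ⟨z, hz, hzd⟩ := delone_cover hX (p - R - r)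
    refine ⟨z, hz, ?_⟩
    have := le_abs_self (z - (p - R - r))
    simp only [Set.mem_Iio]
    linarith
  set S := X ∩ Set.Iio p with hS
  have hbdd : BddAbove S := ⟨p, fun z hz => (le_of_lt hz.2)⟩
  set q := sSup S with hq
  have hlow : ∀ z ∈ S, z ≤ p - r := by
    intro z hz
    have hne : z ≠ p := ne_of_lt hz.2
    by_contra hc
    push_neg at hc
    exact hne (delone_sep hX hz.1 hp
      (by rw [abs_sub_lt_iff]; constructor <;> [linarith [Set.mem_Iio.mp hz.2]; linarith]))
  have hqlow : q ≤ p - r := csSup_le hSne hlow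
  have hclose : ∀ ε : ℝ, 0 < ε → ∃ z ∈ S, q - ε < z := by
    intro ε hε
    by_contra hc
    push_neg at hc
    have := csSup_le hSne hc
    linarith
  obtain ⟨w, hwS, hw⟩ := hclose r hr
  have hwq : w = q := by
    refine le_antisymm (le_csSup hbdd hwS) ?_
    have : ∀ ε : ℝ, 0 < ε → q ≤ w + ε := by
      intro ε hε
      rcases le_or_gt r ε with h | h
      · linarith
      · obtain ⟨z, hzS, hz⟩ := hclose ε hε
        have hzq : z ≤ q := le_csSup hbdd hzS
        have hwq' : w ≤ q := le_csSup hbdd hwS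
        have : z = w := delone_sep hX hzS.1 hwS.1
          (by rw [abs_sub_lt_iff]; constructor <;> linarith)
        linarith
    linarith [le_of_forall_pos_le_add this]
  have hqS : q ∈ S := hwq ▸ hwS
  refine ⟨q, hqS.1, lt_of_le_of_lt hqlow (by linarith), ?_, fun z hz hpz => le_csSup hbdd ⟨hz, hpz⟩⟩
  by_contra hc
  push_neg at hc
  obtain ⟨z, hz, hzd⟩ := delone_cover hX ((p + q)/2)
  have h1 := le_abs_self (z - (p+q)/2)
  have h2 := neg_abs_le (z - (p+q)/2)
  have hzp : z < p := by linarith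
  have := le_csSup hbdd (⟨hz, hzp⟩ : z ∈ S)
  linarith

lemma isoReal (k : ℝ ≃ᵢ ℝ) : (∀ t, k t = t + k 0) ∨ (∀ t, k t = k 0 - t) := by
  have hd : ∀ a b : ℝ, |k a - k b| = |a - b| := by
    intro a b
    have := k.isometry.dist_eq a b
    simpa [Real.dist_eq] using this
  set c := k 0 with hc
  have key : ∀ t u : ℝ, (k t - c) * (k u - c) = t * u := by
    intro t u
    have h1 : (k t - k u)^2 = (t - u)^2 := by
      rw [← sq_abs (k t - k u), hd, sq_abs]
    have h2 : (k t - c)^2 = t^2 := by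
      rw [← sq_abs (k t - c), hd, sq_abs]; ring_nf
    have h3 : (k u - c)^2 = u^2 := by
      rw [← sq_abs (k u - c), hd, sq_abs]; ring_nf
    nlinarith [h1, h2, h3]
  have hone : (k 1 - c) * (k 1 - c) = 1 := by simpa using key 1 1
  rcases mul_self_eq_one_iff.mp hone with h | h
  · left
    intro t
    have := key t 1
    rw [h, mul_one, mul_one] at this
    linarith
  · right
    intro t
    have := key t 1
    rw [h, mul_neg_one, mul_one] at this
    linarith

lemma gap_step {R : ℝ} {X : Set ℝ}
    {p' p q q' : ℝ} (hp : p ∈ X)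
    (hprev : SpecPrev X R p p') (hnext : SpecNext X R p q) (hnext' : SpecNext X R q q')
    (hcl : ClustersEquiv X p q (2*R)) : q' - q = p - p' := by
  obtain ⟨k, hkp, hkc⟩ := hcl
  have fwd : ∀ z, z ∈ X → |z - p| ≤ 2*R → (k z ∈ X ∧ |k z - q| ≤ 2*R) := by
    intro z hz hzd
    have : k z ∈ cluster X q (2*R) := by
      rw [← hkc]
      exact ⟨z, ⟨hz, by simpa [Metric.mem_closedBall, Real.dist_eq] using hzd⟩, rfl⟩
    exact ⟨this.1, by simpa [Metric.mem_closedBall, Real.dist_eq] using this.2⟩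
  have bwd : ∀ z, z ∈ X → |z - q| ≤ 2*R → ∃ w, w ∈ X ∧ |w - p| ≤ 2*R ∧ k w = z := by
    intro z hz hzd
    have : z ∈ k '' cluster X p (2*R) := by
      rw [hkc]
      exact ⟨hz, by simpa [Metric.mem_closedBall, Real.dist_eq] using hzd⟩
    obtain ⟨w, hw, hwz⟩ := this
    exact ⟨w, hw.1, by simpa [Metric.mem_closedBall, Real.dist_eq] using hw.2, hwz⟩
  obtain ⟨hp'X, hp'lt, hb2R, hpmax⟩ := hprev
  obtain ⟨hqX, hqlt, hg2R, hqmin⟩ := hnext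
  obtain ⟨hq'X, hq'lt, _, hq'min⟩ := hnext'
  set b := p - p' with hbdef
  set g := q - p with hgdef
  have hbpos : 0 < b := by simp [hbdef]; linarith
  have hgpos : 0 < g := by simp [hgdef]; linarith
  rcases isoReal k with hk | hk
  · -- translation case : k t = t + c with c = g
    have hc : k 0 = g := by
      have h1 := hk p
      rw [hkp] at h1
      simp [hgdef]; linarith
    rw [hc] at hk
    have hble : b ≤ g := by
      obtain ⟨w, hwX, hwd, hwk⟩ := bwd p hp
        (by rw [abs_sub_comm]; rw [abs_of_pos hgpos] at *; exact hg2R)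
      rw [hk w] at hwk
      have hwlt : w < p := by linarith
      have := hpmax w hwX hwlt
      linarith
    have hgle : g ≤ b := by
      have h1 := fwd p' hp'X
        (by rw [abs_sub_comm, abs_of_pos (by linarith : (0:ℝ) < p - p')]; exact hb2R)
      rw [hk p'] at h1
      by_contra hcon
      push_neg at hcon
      have hlt : p < p' + g := by have := hbdef; linarith
      have hlt2 : p' + g < q := by have := hgdef; linarith
      have := hqmin (p' + g) h1.1 hlt
      linarith
    have hgb : g = b := le_antisymm hgle hble
    have h3 := fwd q hqX (by rw [abs_of_pos (by linarith : (0:ℝ) < q - p)]; exact hg2R)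
    rw [hk q] at h3
    have : q' = q + g := by
      refine le_antisymm (hq'min _ h3.1 (by linarith)) ?_
      by_contra hcon
      push_neg at hcon
      obtain ⟨w, hwX, hwd, hwk⟩ := bwd q' hq'X
        (by rw [abs_of_pos (by linarith : (0:ℝ) < q' - q)]; linarith)
      rw [hk w] at hwk
      have hw1 : p < w := by have := hgdef; linarith
      have := hqmin w hwX hw1
      linarith
    have := hbdef
    linarith
  · -- reflection case : k t = c - t with c = p + q
    have hc : k 0 = p + q := by
      have h1 := hk p
      rw [hkp] at h1
      linarith
    rw [hc] at hk
    have h1 := fwd p' hp'X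
      (by rw [abs_sub_comm, abs_of_pos (by linarith : (0:ℝ) < p - p')]; exact hb2R)
    rw [hk p'] at h1
    have hqb : p + q - p' = q + b := by rw [hbdef]; ring
    rw [hqb] at h1
    have : q' = q + b := by
      refine le_antisymm (hq'min _ h1.1 (by linarith)) ?_
      by_contra hcon
      push_neg at hcon
      obtain ⟨w, hwX, hwd, hwk⟩ := bwd q' hq'X
        (by rw [abs_of_pos (by linarith : (0:ℝ) < q' - q)]; linarith)
      rw [hk w] at hwk
      have hw1 : w < p := by linarith
      have hw2 : p' < w := by have hb2 := hbdef; linarith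
      have := hpmax w hwX hw1
      linarith
    linarith

/-- Translation as an isometry of ℝ. -/
def transIso (c : ℝ) : ℝ ≃ᵢ ℝ where
  toEquiv := ⟨fun t => t + c, fun t => t - c,
    fun t => by simp, fun t => by simp⟩
  isometry_toFun := Isometry.of_dist_eq fun a b => by
    rw [Real.dist_eq, Real.dist_eq]; congr 1; ring

/-- Reflection `t ↦ c - t` as an isometry of ℝ. -/
def reflIso (c : ℝ) : ℝ ≃ᵢ ℝ where
  toEquiv := ⟨fun t => c - t, fun t => c - t,
    fun t => by simp, fun t => by simp⟩
  isometry_toFun := Isometry.of_dist_eq fun a b => by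
    rw [Real.dist_eq, Real.dist_eq, show c - a - (c - b) = -(a - b) by ring, abs_neg]

/-- `ρ̂₁ ≤ 2R`. If `X ⊂ ℝ` is a Delone set of type `(r,R)` all of whose
`2R`-clusters are mutually equivalent, then `X` is a regular system. -/
theorem regularityRadius_dim1_le (r R : ℝ) (hr : 0 < r) (hrR : r < R)
    (X : Set ℝ) (hX : IsDeloneSet X r R)
    (hclus : ∀ x ∈ X, ∀ x' ∈ X, ClustersEquiv X x x' (2 * R)) :
    IsRegularSystem X := by
  classical
  have hR : 0 < R := lt_trans hr hrR
  intro x hx y hy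
  -- choice of next and previous point functions
  have hfex : ∀ p : X, ∃ q : X, SpecNext X R (p : ℝ) (q : ℝ) := by
    intro p
    obtain ⟨q, hq⟩ := exists_next hX hr hR p.2
    exact ⟨⟨q, hq.1⟩, hq⟩
  choose f hf using hfex
  have hbex : ∀ p : X, ∃ q : X, SpecPrev X R (p : ℝ) (q : ℝ) := by
    intro p
    obtain ⟨q, hq⟩ := exists_prev hX hr hR p.2
    exact ⟨⟨q, hq.1⟩, hq⟩
  choose bk hbk using hbex
  set x0 : X := ⟨x, hx⟩ with hx0
  set s : ℤ → ℝ := fun n =>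
    if 0 ≤ n then ((f^[n.toNat] x0 : X) : ℝ) else ((bk^[(-n).toNat] x0 : X) : ℝ) with hsdef
  have hs0 : s 0 = x := by simp [hsdef, hx0]
  have s_mem : ∀ n : ℤ, s n ∈ X := by
    intro n
    simp only [hsdef]
    split <;> exact Subtype.coe_prop _
  have s_succ : ∀ n : ℤ, SpecNext X R (s n) (s (n+1)) := by
    intro n
    rcases le_or_gt 0 n with hn | hn
    · have e1 : s n = ((f^[n.toNat] x0 : X) : ℝ) := by
        simp only [hsdef]; rw [if_pos hn]
      have e2 : s (n+1) = ((f^[n.toNat + 1] x0 : X) : ℝ) := by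
        simp only [hsdef]
        rw [if_pos (by omega : (0:ℤ) ≤ n + 1)]
        have : (n+1).toNat = n.toNat + 1 := by omega
        rw [this]
      rw [e1, e2, Function.iterate_succ_apply']
      exact hf _
    · have e1 : s n = ((bk^[(-(n+1)).toNat + 1] x0 : X) : ℝ) := by
        simp only [hsdef]
        rw [if_neg (by omega)]
        have : (-n).toNat = (-(n+1)).toNat + 1 := by omega
        rw [this]
      have e2 : s (n+1) = ((bk^[(-(n+1)).toNat] x0 : X) : ℝ) := by
        simp only [hsdef]
        rcases lt_or_eq_of_le (by omega : n + 1 ≤ 0) with h | h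
        · rw [if_neg (by omega)]
        · rw [if_pos (by omega)]
          have h1 : (n+1).toNat = 0 := by omega
          have h2 : (-(n+1)).toNat = 0 := by omega
          rw [h1, h2]
          simp
      rw [e1, e2, Function.iterate_succ_apply']
      obtain ⟨h1, h2, h3, h4⟩ := hbk (bk^[(-(n+1)).toNat] x0)
      refine ⟨Subtype.coe_prop _, h2, h3, ?_⟩
      intro z hz hpz
      by_contra hzq
      push_neg at hzq
      exact absurd (h4 z hz hzq) (not_le.mpr hpz)
  have s_prev : ∀ n : ℤ, SpecPrev X R (s (n+1)) (s n) := by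
    intro n
    obtain ⟨h1, h2, h3, h4⟩ := s_succ n
    refine ⟨s_mem n, h2, h3, ?_⟩
    intro z hz hzlt
    by_contra hc
    push_neg at hc
    exact absurd (h4 z hz hc) (not_le.mpr hzlt)
  have gap_r : ∀ n : ℤ, r ≤ s (n+1) - s n := by
    intro n
    obtain ⟨h1, h2, _, _⟩ := s_succ n
    by_contra hc
    push_neg at hc
    have := delone_sep hX (s_mem (n+1)) (s_mem n) (by rw [abs_of_pos (by linarith)]; linarith)
    linarith
  -- the key periodicity property
  have hper : ∀ n : ℤ, s (n+2) - s (n+1) = s n - s (n-1) := by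
    intro n
    have hprev : SpecPrev X R (s n) (s (n-1)) := by
      have := s_prev (n-1)
      rwa [show n - 1 + 1 = n by ring] at this
    have hnext2 : SpecNext X R (s (n+1)) (s (n+2)) := by
      have := s_succ (n+1)
      rwa [show n + 1 + 1 = n + 2 by ring] at this
    exact gap_step (s_mem n) hprev (s_succ n) hnext2
      (hclus (s n) (s_mem n) (s (n+1)) (s_mem (n+1)))
  set T : ℝ := s 2 - s 0 with hT
  have key2 : ∀ n : ℤ, s (n+2) = s n + T := by
    intro n
    induction n using Int.induction_on with
    | zero => rw [hT]; norm_num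
    | succ i ih =>
      have h := hper (i+1)
      rw [show (i:ℤ)+1+2 = i+1+2 from rfl] at h
      rw [show (i:ℤ)+1+1 = i+2 by ring, show (i:ℤ)+1-1 = i by ring] at h
      linarith
    | pred i ih =>
      have h := hper (-i)
      rw [show -(i:ℤ)-1+2 = -(i:ℤ)+1 by ring]
      rw [show -(i:ℤ)-1 = -(i:ℤ)-1 from rfl]
      linarith [h]
  have hL1 : ∀ u : ℤ, s (2*u) = s 0 + u * T ∧ s (2*u+1) = s 1 + u * T := by
    intro u
    induction u using Int.induction_on with
    | zero => norm_num
    | succ i ih =>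
      constructor
      · have h := key2 (2*i)
        rw [show 2*((i:ℤ)+1) = 2*i+2 by ring, h, ih.1]
        push_cast
        ring
      · have h := key2 (2*i+1)
        rw [show 2*((i:ℤ)+1)+1 = 2*i+1+2 by ring, h, ih.2]
        push_cast
        ring
    | pred i ih =>
      obtain ⟨ih1, ih2⟩ := ih
      have h1 := key2 (2*(-(i:ℤ)-1))
      rw [show 2*(-(i:ℤ)-1)+2 = 2*(-(i:ℤ)) by ring] at h1
      have h2 := key2 (2*(-(i:ℤ)-1)+1)
      rw [show 2*(-(i:ℤ)-1)+1+2 = 2*(-(i:ℤ))+1 by ring] at h2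
      push_cast at ih1 ih2 ⊢
      constructor
      · nlinarith [h1, ih1]
      · nlinarith [h2, ih2]
  have hF1 : ∀ l j : ℤ, s (j + 2*l) = s j + l * T := by
    intro l j
    rcases Int.even_or_odd j with ⟨u, hu⟩ | ⟨u, hu⟩
    · rw [hu, show u + u + 2*l = 2*(u+l) by ring, (hL1 (u+l)).1,
        show u + u = 2*u by ring, (hL1 u).1]
      push_cast
      ring
    · rw [hu, show 2*u+1+2*l = 2*(u+l)+1 by ring, (hL1 (u+l)).2, (hL1 u).2]
      push_cast
      ring
  have hF2 : ∀ kk j : ℤ, Odd kk → s 0 + s kk - s j = s (kk - j) := by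
    intro kk j hodd
    obtain ⟨v, hv⟩ := hodd
    rcases Int.even_or_odd j with ⟨u, hu⟩ | ⟨u, hu⟩
    · rw [hv, hu, show 2*v+1 - (u+u) = 2*(v-u)+1 by ring, (hL1 (v-u)).2,
        show (2:ℤ)*v+1 = 2*v+1 from rfl, (hL1 v).2,
        show u + u = 2*u by ring, (hL1 u).1]
      push_cast
      ring
    · rw [hv, hu, show 2*v+1 - (2*u+1) = 2*(v-u) by ring, (hL1 (v-u)).1,
        (hL1 v).2, (hL1 u).2]
      push_cast
      ring
  -- X is exactly the range of s
  have hXr : X = Set.range s := by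
    apply Set.Subset.antisymm
    · intro y' hy'
      rcases le_or_gt x y' with hcase | hcase
      · have grow : ∀ n : ℕ, x + n * r ≤ s n := by
          intro n
          induction n with
          | zero => simp [hs0]
          | succ m ihm =>
            have h := gap_r (m : ℤ)
            have e : ((m+1 : ℕ) : ℤ) = (m : ℤ) + 1 := by push_cast; ring
            rw [e]
            push_cast
            linarith
        have hex : ∃ n : ℕ, y' < s (n : ℤ) := by
          obtain ⟨n, hn⟩ := exists_nat_gt ((y' - x)/r)
          refine ⟨n, ?_⟩
          have h2 : (y' - x)/r * r < n * r := mul_lt_mul_of_pos_right hn hr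
          rw [div_mul_cancel₀ _ (ne_of_gt hr)] at h2
          linarith [grow n]
        have hspec : y' < s ((Nat.find hex : ℕ) : ℤ) := Nat.find_spec hex
        have hne : Nat.find hex ≠ 0 := by
          intro h0
          rw [h0] at hspec
          norm_num [hs0] at hspec
          linarith
        set m := Nat.find hex - 1 with hm
        have hmlt : m < Nat.find hex := by omega
        have hnot := Nat.find_min hex hmlt
        push_neg at hnot
        have hcast : ((Nat.find hex : ℕ) : ℤ) = (m : ℤ) + 1 := by
          rw [hm]; push_cast [Nat.sub_add_cancel (by omega : 1 ≤ Nat.find hex)]; omega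
        obtain ⟨_, _, _, hmin⟩ := s_succ (m : ℤ)
        rcases eq_or_lt_of_le hnot with h | h
        · exact ⟨(m : ℤ), h⟩
        · exfalso
          have := hmin y' hy' h
          rw [← hcast] at this
          linarith
      · have grow : ∀ n : ℕ, s (-(n:ℤ)) ≤ x - n * r := by
          intro n
          induction n with
          | zero => simp [hs0]
          | succ m ihm =>
            have h := gap_r (-(m:ℤ) - 1)
            rw [show -(m:ℤ) - 1 + 1 = -(m:ℤ) by ring] at h
            have e : -((m+1 : ℕ) : ℤ) = -(m:ℤ) - 1 := by push_cast; ring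
            rw [e]
            push_cast
            linarith
        have hex : ∃ n : ℕ, s (-(n:ℤ)) < y' := by
          obtain ⟨n, hn⟩ := exists_nat_gt ((x - y')/r)
          refine ⟨n, ?_⟩
          have h2 : (x - y')/r * r < n * r := mul_lt_mul_of_pos_right hn hr
          rw [div_mul_cancel₀ _ (ne_of_gt hr)] at h2
          linarith [grow n]
        have hspec : s (-((Nat.find hex : ℕ) : ℤ)) < y' := Nat.find_spec hex
        have hne : Nat.find hex ≠ 0 := by
          intro h0
          rw [h0] at hspec
          norm_num [hs0] at hspec
          linarith
        set m := Nat.find hex - 1 with hm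
        have hmlt : m < Nat.find hex := by omega
        have hnot := Nat.find_min hex hmlt
        push_neg at hnot
        have hcast : -((Nat.find hex : ℕ) : ℤ) + 1 = -((m:ℕ) : ℤ) := by
          have : Nat.find hex = m + 1 := by omega
          rw [this]; push_cast; ring
        obtain ⟨_, _, _, hmin⟩ := s_succ (-((Nat.find hex : ℕ) : ℤ))
        have h1 := hmin y' hy' hspec
        rw [hcast] at h1
        exact ⟨-((m:ℕ) : ℤ), le_antisymm h1 hnot⟩
    · rintro _ ⟨n, rfl⟩
      exact s_mem n
  -- finish: obtain the index of y and build the isometry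
  obtain ⟨kk, hkk⟩ : y ∈ Set.range s := hXr ▸ hy
  rcases Int.even_or_odd kk with ⟨l, hl⟩ | ⟨l, hl⟩
  · -- even case: translation by l * T
    refine ⟨transIso (l*T), ?_, ?_⟩
    · rw [hXr]
      ext z
      simp only [Set.mem_image, Set.mem_range]
      constructor
      · rintro ⟨w, ⟨j, rfl⟩, rfl⟩
        refine ⟨j + 2*l, ?_⟩
        show s (j + 2*l) = s j + l*T
        exact hF1 l j
      · rintro ⟨j, rfl⟩
        refine ⟨s (j - 2*l), ⟨j - 2*l, rfl⟩, ?_⟩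
        show s (j - 2*l) + l*T = s j
        rw [← hF1 l (j - 2*l), show j - 2*l + 2*l = j by ring]
    · show x + l*T = y
      calc x + l*T = s 0 + l*T := by rw [hs0]
        _ = s (0 + 2*l) := (hF1 l 0).symm
        _ = s kk := by rw [show (0:ℤ) + 2*l = kk by rw [hl]; ring]
        _ = y := hkk
  · -- odd case: reflection through (x+y)/2
    have hoddkk : Odd kk := ⟨l, hl⟩
    refine ⟨reflIso (x + y), ?_, ?_⟩
    · rw [hXr]
      ext z
      simp only [Set.mem_image, Set.mem_range]
      constructor
      · rintro ⟨w, ⟨j, rfl⟩, rfl⟩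
        refine ⟨kk - j, ?_⟩
        show s (kk - j) = x + y - s j
        rw [← hs0, ← hkk]
        exact (hF2 kk j hoddkk).symm
      · rintro ⟨j, rfl⟩
        refine ⟨s (kk - j), ⟨kk - j, rfl⟩, ?_⟩
        show x + y - s (kk - j) = s j
        rw [← hs0, ← hkk]
        have h := hF2 kk (kk - j) hoddkk
        rw [show kk - (kk - j) = j by ring] at h
        linarith
    · show x + y - x = y
      ring
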